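/- arXiv:2603.08585 — 5 statements merged into one kernel-verified Lean document; each statement's English description precedes it below -/
import Mathlib

section
/- Let D = (V,E) be a finite reflexive digraph admitting a nest ordering, with the intervals I_x = [a_x, b_x] and J_x = [α_x, β_x] defined by the stop-function construction. Then J_x ⊆ I_x for every x ∈ V, i.e., a_x ≤ α_x and β_x ≤ b_x. -/
open scoped Classical

/-- The vertex set is identified with `{1, …, n} ⊆ ℤ` via the nest ordering. -/
def Vert (n : ℕ) (x : ℤ) : Prop := 1 ≤ x ∧ x ≤ (n : ℤ)

/-- The arc `uv` is symmetric: both `uv` and `vu` are arcs. -/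
def SymArc (E : ℤ → ℤ → Prop) (u v : ℤ) : Prop := E u v ∧ E v u

/-- The natural order of `{1, …, n}` is a nest ordering of the digraph `E`:
for all vertices `u ≤ v ≤ w ≤ z` (repetitions allowed),
properties (i), (ii), (iii) hold. -/
def NestOrdered (n : ℕ) (E : ℤ → ℤ → Prop) : Prop :=
  ∀ u v w z : ℤ, Vert n u → Vert n v → Vert n w → Vert n z →
    u ≤ v → v ≤ w → w ≤ z →
    ((E u w ∧ E u z → E u v ∨ (SymArc E v w ∧ SymArc E v z ∧ SymArc E w z)) ∧
     (E z u ∧ E z v → E z w ∨ (SymArc E w u ∧ SymArc E v u ∧ SymArc E w v)) ∧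
     (E u z ∧ E v w → E u w ∨ E v z) ∧
     (E z u ∧ E w v → E z v ∨ E w u) ∧
     (E u w ∧ E v z → E v w ∨ E u z) ∧
     (E z v ∧ E w u → E z u ∨ E w v))

/-- `σR x` is the least `z > x` that is not an out-neighbor of `x`
(the auxiliary isolated vertices `0` and `n+1` are not out-neighbors of anyone,
since all arcs of `E` join vertices of `{1, …, n}`). -/
def IsStopR (E : ℤ → ℤ → Prop) (σR : ℤ → ℤ) (x : ℤ) : Prop :=
  x < σR x ∧ ¬ E x (σR x) ∧ ∀ z : ℤ, x < z → ¬ E x z → σR x ≤ z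

/-- `σL x` is the greatest `z < x` that is not an out-neighbor of `x`. -/
def IsStopL (E : ℤ → ℤ → Prop) (σL : ℤ → ℤ) (x : ℤ) : Prop :=
  σL x < x ∧ ¬ E x (σL x) ∧ ∀ z : ℤ, z < x → ¬ E x z → z ≤ σL x

/-- `N⁺_R(x)`: the out-neighbors of `x` beyond `σR x`. -/
noncomputable def NRset (n : ℕ) (E : ℤ → ℤ → Prop) (σR : ℤ → ℤ) (x : ℤ) : Finset ℤ :=
  (Finset.Icc 1 (n : ℤ)).filter fun z => σR x < z ∧ E x z

/-- `N⁺_L(x)`: the out-neighbors of `x` before `σL x`. -/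
noncomputable def NLset (n : ℕ) (E : ℤ → ℤ → Prop) (σL : ℤ → ℤ) (x : ℤ) : Finset ℤ :=
  (Finset.Icc 1 (n : ℤ)).filter fun z => z < σL x ∧ E x z

/-- Left endpoint `a_x = σL x + 1/(2 + |N⁺_L(x)|)` of the interval `I_x`. -/
noncomputable def aEnd (n : ℕ) (E : ℤ → ℤ → Prop) (σL : ℤ → ℤ) (x : ℤ) : ℝ :=
  (σL x : ℝ) + 1 / (2 + ((NLset n E σL x).card : ℝ))

/-- Right endpoint `b_x = σR x − 1/(2 + |N⁺_R(x)|)` of the interval `I_x`. -/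
noncomputable def bEnd (n : ℕ) (E : ℤ → ℤ → Prop) (σR : ℤ → ℤ) (x : ℤ) : ℝ :=
  (σR x : ℝ) - 1 / (2 + ((NRset n E σR x).card : ℝ))

/-- Left endpoint `α_x = min({b_z : z < x, zx ∈ E} ∪ {x})` of the interval `J_x`. -/
noncomputable def alphaEnd (n : ℕ) (E : ℤ → ℤ → Prop) (σR : ℤ → ℤ) (x : ℤ) : ℝ :=
  (insert (x : ℝ)
      ((((Finset.Icc 1 (n : ℤ)).filter fun z => z < x ∧ E z x)).image (bEnd n E σR))).min'
    (Finset.insert_nonempty _ _)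

/-- Right endpoint `β_x = max({a_z : z > x, zx ∈ E} ∪ {x})` of the interval `J_x`. -/
noncomputable def betaEnd (n : ℕ) (E : ℤ → ℤ → Prop) (σL : ℤ → ℤ) (x : ℤ) : ℝ :=
  (insert (x : ℝ)
      ((((Finset.Icc 1 (n : ℤ)).filter fun z => x < z ∧ E z x)).image (aEnd n E σL))).max'
    (Finset.insert_nonempty _ _)


/-- Arithmetic helper: the fractional offsets lie in `(0, 1/2]`. -/
private lemma frac_le_half (c : ℕ) : 1 / (2 + (c : ℝ)) ≤ 1 / 2 := by
  have hc : (0:ℝ) ≤ (c:ℝ) := Nat.cast_nonneg c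
  rw [div_le_div_iff₀ (by linarith) (by norm_num)]
  linarith

private lemma aux_arith (s t : ℤ) (h : s < t) (c d : ℕ) :
    (s : ℝ) + 1 / (2 + (c : ℝ)) ≤ (t : ℝ) - 1 / (2 + (d : ℝ)) := by
  have h1 : (s : ℝ) + 1 ≤ (t : ℝ) := by exact_mod_cast h
  have hc := frac_le_half c
  have hd := frac_le_half d
  linarith

/-- Key combinatorial lemma: if `z < x` and `zx ∈ E`, then `σL x < σR z`. -/
private lemma key_lt (n : ℕ) (E : ℤ → ℤ → Prop)
    (hnest : NestOrdered n E) (σR σL : ℤ → ℤ)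
    (hσR : ∀ x, Vert n x → IsStopR E σR x)
    (hσL : ∀ x, Vert n x → IsStopL E σL x)
    (z x : ℤ) (hz : Vert n z) (hx : Vert n x) (hzx : z < x) (hE : E z x) :
    σL x < σR z := by
  by_contra h
  push_neg at h
  obtain ⟨hs1, hs2, _⟩ := hσR z hz
  obtain ⟨ht1, ht2, _⟩ := hσL x hx
  have hVs : Vert n (σR z) := ⟨by linarith [hz.1], by linarith [hx.2]⟩
  have hVt : Vert n (σL x) := ⟨by linarith [hz.1], by linarith [hx.2]⟩
  rcases eq_or_lt_of_le h with heq | hlt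
  · have h1 := (hnest z (σR z) x x hz hVs hx hx hs1.le (by linarith) le_rfl).1
    rcases h1 ⟨hE, hE⟩ with h2 | h2
    · exact hs2 h2
    · exact ht2 (heq ▸ h2.1.2)
  · have hEzt : E z (σL x) := by
      have h1 := (hnest z (σL x) x x hz hVt hx hx (by linarith) ht1.le le_rfl).1
      rcases h1 ⟨hE, hE⟩ with h2 | h2
      · exact h2
      · exact absurd h2.1.2 ht2
    have h1 := (hnest z (σR z) (σL x) x hz hVs hVt hx hs1.le hlt.le ht1.le).1
    rcases h1 ⟨hEzt, hE⟩ with h2 | h2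
    · exact hs2 h2
    · exact ht2 h2.2.2.2

/-- Mirror key lemma: if `x < z` and `zx ∈ E`, then `σL z < σR x`. -/
private lemma key_lt' (n : ℕ) (E : ℤ → ℤ → Prop)
    (hnest : NestOrdered n E) (σR σL : ℤ → ℤ)
    (hσR : ∀ x, Vert n x → IsStopR E σR x)
    (hσL : ∀ x, Vert n x → IsStopL E σL x)
    (z x : ℤ) (hz : Vert n z) (hx : Vert n x) (hxz : x < z) (hE : E z x) :
    σL z < σR x := by
  by_contra h
  push_neg at h
  obtain ⟨hs1, hs2, _⟩ := hσR x hx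
  obtain ⟨ht1, ht2, _⟩ := hσL z hz
  have hVs : Vert n (σR x) := ⟨by linarith [hx.1], by linarith [hz.2]⟩
  have hVt : Vert n (σL z) := ⟨by linarith [hx.1], by linarith [hz.2]⟩
  rcases eq_or_lt_of_le h with heq | hlt
  · have h1 := (hnest x x (σR x) z hx hx hVs hz le_rfl hs1.le (by linarith)).2.1
    rcases h1 ⟨hE, hE⟩ with h2 | h2
    · exact ht2 (heq ▸ h2)
    · exact hs2 h2.1.2
  · have hEzs : E z (σR x) := by
      have h1 := (hnest x x (σR x) z hx hx hVs hz le_rfl hs1.le (by linarith)).2.1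
      rcases h1 ⟨hE, hE⟩ with h2 | h2
      · exact h2
      · exact absurd h2.1.2 hs2
    have h1 := (hnest x (σR x) (σL z) z hx hVs hVt hz hs1.le hlt.le ht1.le).2.1
    rcases h1 ⟨hE, hEzs⟩ with h2 | h2
    · exact ht2 h2
    · exact hs2 h2.2.1.2

/-- For a finite reflexive digraph with a nest ordering, the intervals of the
stop-function construction satisfy `J_x ⊆ I_x`, i.e. `a_x ≤ α_x` and `β_x ≤ b_x`. -/
theorem stop_construction_contention
    (n : ℕ) (E : ℤ → ℤ → Prop)
    (hdom : ∀ x y, E x y → Vert n x ∧ Vert n y)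
    (hrefl : ∀ x, Vert n x → E x x)
    (hnest : NestOrdered n E)
    (σR σL : ℤ → ℤ)
    (hσR : ∀ x, Vert n x → IsStopR E σR x)
    (hσL : ∀ x, Vert n x → IsStopL E σL x) :
    ∀ x, Vert n x →
      aEnd n E σL x ≤ alphaEnd n E σR x ∧
      betaEnd n E σL x ≤ bEnd n E σR x := by
  intro x hx
  obtain ⟨hR1, _, _⟩ := hσR x hx
  obtain ⟨hL1, _, _⟩ := hσL x hx
  constructor
  · apply Finset.le_min'
    intro y hy
    rw [Finset.mem_insert] at hy
    rcases hy with rfl | hy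
    · have h1 : (σL x : ℝ) + 1 ≤ (x : ℝ) := by exact_mod_cast hL1
      have hc := frac_le_half (NLset n E σL x).card
      unfold aEnd
      linarith
    · rw [Finset.mem_image] at hy
      obtain ⟨z, hzmem, rfl⟩ := hy
      rw [Finset.mem_filter, Finset.mem_Icc] at hzmem
      obtain ⟨⟨hz1, hz2⟩, hzx, hEzx⟩ := hzmem
      have hkey := key_lt n E hnest σR σL hσR hσL z x ⟨hz1, hz2⟩ hx hzx hEzx
      exact aux_arith _ _ hkey _ _
  · apply Finset.max'_le
    intro y hy
    rw [Finset.mem_insert] at hy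
    rcases hy with rfl | hy
    · have h1 : (x : ℝ) + 1 ≤ (σR x : ℝ) := by exact_mod_cast hR1
      have hc := frac_le_half (NRset n E σR x).card
      unfold bEnd
      linarith
    · rw [Finset.mem_image] at hy
      obtain ⟨z, hzmem, rfl⟩ := hy
      rw [Finset.mem_filter, Finset.mem_Icc] at hzmem
      obtain ⟨⟨hz1, hz2⟩, hxz, hEzx⟩ := hzmem
      have hkey := key_lt' n E hnest σR σL hσR hσL z x ⟨hz1, hz2⟩ hx hxz hEzx
      exact aux_arith _ _ hkey _ _
end

section
/- Let D = (V,E) be a finite reflexive digraph admitting a nest ordering, with the stop functions σ_R, σ_L and the sets N^+_R, N^+_L from the stop-function construction. For any two vertices x, y ∈ V, if σ_R(x) = σ_R(y), then N^+_R(x) ⊆ N^+_R(y) or N^+_R(y) ⊆ N^+_R(x). -/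
open scoped Classical

lemma stop_key (n : ℕ) (E : ℤ → ℤ → Prop)
    (hdom : ∀ x y, E x y → Vert n x ∧ Vert n y)
    (hnest : NestOrdered n E)
    (σR : ℤ → ℤ)
    (hσR : ∀ x, Vert n x → IsStopR E σR x)
    (x y p q : ℤ) (hx : Vert n x) (hy : Vert n y) (hs : σR x = σR y)
    (hxy : x ≤ y)
    (hxp : E x p) (hyp : ¬ E y p) (hp : σR x < p)
    (hyq : E y q) (hxq : ¬ E x q) (hq : σR y < q) : False := by
  have hpV : Vert n p := (hdom x p hxp).2
  have hqV : Vert n q := (hdom y q hyq).2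
  have hyσ : y < σR y := (hσR y hy).1
  have hyp' : y ≤ p := le_of_lt (lt_trans hyσ (hs ▸ hp))
  have hyq' : y ≤ q := le_of_lt (lt_trans hyσ hq)
  rcases le_total p q with hpq | hqp
  · have := (hnest x y p q hx hy hpV hqV hxy hyp' hpq).2.2.2.2.1 ⟨hxp, hyq⟩
    tauto
  · have := (hnest x y q p hx hy hqV hpV hxy hyq' hqp).2.2.1 ⟨hxp, hyq⟩
    tauto

/-- key -/
theorem stop_construction_nested_right_neighborhoods
    (n : ℕ) (E : ℤ → ℤ → Prop)
    (hdom : ∀ x y, E x y → Vert n x ∧ Vert n y)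
    (hrefl : ∀ x, Vert n x → E x x)
    (hnest : NestOrdered n E)
    (σR σL : ℤ → ℤ)
    (hσR : ∀ x, Vert n x → IsStopR E σR x)
    (hσL : ∀ x, Vert n x → IsStopL E σL x) :
    ∀ x y, Vert n x → Vert n y → σR x = σR y →
      NRset n E σR x ⊆ NRset n E σR y ∨ NRset n E σR y ⊆ NRset n E σR x := by
  intro x y hx hy hs
  by_contra h
  push_neg at h
  obtain ⟨hns1, hns2⟩ := h
  obtain ⟨p, hpmem, hpnot⟩ := Finset.not_subset.mp hns1
  obtain ⟨q, hqmem, hqnot⟩ := Finset.not_subset.mp hns2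
  simp only [NRset, Finset.mem_filter, Finset.mem_Icc] at hpmem hpnot hqmem hqnot
  obtain ⟨hpIcc, hpσ, hxp⟩ := hpmem
  obtain ⟨hqIcc, hqσ, hyq⟩ := hqmem
  have hyp : ¬ E y p := fun h' => hpnot ⟨hpIcc, hs ▸ hpσ, h'⟩
  have hxq : ¬ E x q := fun h' => hqnot ⟨hqIcc, hs ▸ hqσ, h'⟩
  rcases le_total x y with hxy | hyx
  · exact stop_key n E hdom hnest σR hσR x y p q hx hy hs hxy hxp hyp hpσ hyq hxq hqσ
  · exact stop_key n E hdom hnest σR hσR y x q p hy hx hs.symm hyx hyq hxq hqσ hxp hyp hpσ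
end

section
/- Let D = (V,E) be a finite reflexive digraph admitting a nest ordering, with the stop functions σ_R, σ_L and the sets N^+_R, N^+_L from the stop-function construction. For any two vertices x, y ∈ V, if σ_L(x) = σ_L(y), then N^+_L(x) ⊆ N^+_L(y) or N^+_L(y) ⊆ N^+_L(x). -/
open scoped Classical

/-- For a finite reflexive digraph with a nest ordering: if `σL x = σL y`,
then `N⁺_L(x) ⊆ N⁺_L(y)` or `N⁺_L(y) ⊆ N⁺_L(x)`. -/
theorem stop_construction_nested_left_neighborhoods
    (n : ℕ) (E : ℤ → ℤ → Prop)
    (hdom : ∀ x y, E x y → Vert n x ∧ Vert n y)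
    (hrefl : ∀ x, Vert n x → E x x)
    (hnest : NestOrdered n E)
    (σR σL : ℤ → ℤ)
    (hσR : ∀ x, Vert n x → IsStopR E σR x)
    (hσL : ∀ x, Vert n x → IsStopL E σL x) :
    ∀ x y, Vert n x → Vert n y → σL x = σL y →
      NLset n E σL x ⊆ NLset n E σL y ∨ NLset n E σL y ⊆ NLset n E σL x := by
  intro x y hx hy hσ
  by_contra hcon
  push_neg at hcon
  obtain ⟨hnxy, hnyx⟩ := hcon
  rw [Finset.not_subset] at hnxy hnyx
  obtain ⟨a, hax, hay⟩ := hnxy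
  obtain ⟨b, hby, hbx⟩ := hnyx
  simp only [NLset, Finset.mem_filter, Finset.mem_Icc] at hax hay hby hbx
  obtain ⟨⟨ha1, han⟩, haσ, hExa⟩ := hax
  obtain ⟨⟨hb1, hbn⟩, hbσ, hEyb⟩ := hby
  have hnEya : ¬ E y a := fun h => hay ⟨⟨ha1, han⟩, hσ ▸ haσ, h⟩
  have hnExb : ¬ E x b := fun h => hbx ⟨⟨hb1, hbn⟩, hσ.symm ▸ hbσ, h⟩
  have hva : Vert n a := ⟨ha1, han⟩
  have hvb : Vert n b := ⟨hb1, hbn⟩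
  have hsx := (hσL x hx).1
  have hsy := (hσL y hy).1
  have hax' : a < x := lt_trans haσ hsx
  have hay' : a < y := lt_trans (hσ ▸ haσ) hsy
  have hbx' : b < x := lt_trans (hσ.symm ▸ hbσ) hsx
  have hby' : b < y := lt_trans hbσ hsy
  rcases le_total x y with hxy | hyx
  · rcases le_total a b with hab | hba
    · rcases (hnest a b x y hva hvb hx hy hab hbx'.le hxy).2.2.2.2.2 ⟨hEyb, hExa⟩ with h | h
      · exact hnEya h
      · exact hnExb h
    · rcases (hnest b a x y hvb hva hx hy hba hax'.le hxy).2.2.2.1 ⟨hEyb, hExa⟩ with h | h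
      · exact hnEya h
      · exact hnExb h
  · rcases le_total a b with hab | hba
    · rcases (hnest a b y x hva hvb hy hx hab hby'.le hyx).2.2.2.1 ⟨hExa, hEyb⟩ with h | h
      · exact hnExb h
      · exact hnEya h
    · rcases (hnest b a y x hvb hva hy hx hba hay'.le hyx).2.2.2.2.2 ⟨hExa, hEyb⟩ with h | h
      · exact hnExb h
      · exact hnEya h
end

section
/- Let D = (V,E) be a finite reflexive digraph admitting a nest ordering, with the intervals I_x = [a_x, b_x] and J_x = [α_x, β_x] defined by the stop-function construction. Then for all x, y ∈ V, xy ∈ E if and only if I_x ∩ J_y ≠ ∅. -/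
open scoped Classical

/-! ### Auxiliary lemmas -/

lemma fullR {E : ℤ → ℤ → Prop} {σR : ℤ → ℤ} {x : ℤ} (h : IsStopR E σR x)
    {w : ℤ} (h1 : x < w) (h2 : w < σR x) : E x w := by
  by_contra hne
  exact absurd (h.2.2 w h1 hne) (not_le.mpr h2)

lemma fullL {E : ℤ → ℤ → Prop} {σL : ℤ → ℤ} {x : ℤ} (h : IsStopL E σL x)
    {w : ℤ} (h1 : σL x < w) (h2 : w < x) : E x w := by
  by_contra hne
  exact absurd (h.2.2 w h2 hne) (not_le.mpr h1)

lemma helper_div_le {a : ℝ} (ha : 0 ≤ a) : 1 / (2 + a) ≤ 1 / 2 := by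
  rw [div_le_div_iff₀ (by linarith) (by norm_num)]
  linarith

lemma helper_div_lt {a b : ℝ} (ha : 0 ≤ a) (hab : a < b) :
    1 / (2 + b) < 1 / (2 + a) := by
  rw [div_lt_div_iff₀ (by linarith) (by linarith)]
  linarith

lemma bEnd_bounds (n : ℕ) (E : ℤ → ℤ → Prop) (σR : ℤ → ℤ) (x : ℤ) :
    (σR x : ℝ) - 1/2 ≤ bEnd n E σR x ∧ bEnd n E σR x < σR x := by
  have hc : (0:ℝ) ≤ ((NRset n E σR x).card : ℝ) := Nat.cast_nonneg _
  constructor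
  · have := helper_div_le hc
    unfold bEnd; linarith
  · have : (0:ℝ) < 1 / (2 + ((NRset n E σR x).card : ℝ)) := by positivity
    unfold bEnd; linarith

lemma aEnd_bounds (n : ℕ) (E : ℤ → ℤ → Prop) (σL : ℤ → ℤ) (x : ℤ) :
    (σL x : ℝ) < aEnd n E σL x ∧ aEnd n E σL x ≤ (σL x : ℝ) + 1/2 := by
  have hc : (0:ℝ) ≤ ((NLset n E σL x).card : ℝ) := Nat.cast_nonneg _
  constructor
  · have : (0:ℝ) < 1 / (2 + ((NLset n E σL x).card : ℝ)) := by positivity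
    unfold aEnd; linarith
  · have := helper_div_le hc
    unfold aEnd; linarith

/-- Key lemma (right version): if `x < y`, `xy ∉ E`, `z < y`, `zy ∈ E`,
then `b_x < b_z`. -/
lemma keyR (n : ℕ) (E : ℤ → ℤ → Prop)
    (hnest : NestOrdered n E)
    (σR : ℤ → ℤ) (hσR : ∀ x, Vert n x → IsStopR E σR x)
    {x y z : ℤ} (hx : Vert n x) (hy : Vert n y) (hz : Vert n z)
    (hxy : x < y) (hnE : ¬ E x y) (hzy : z < y) (hE : E z y) :
    bEnd n E σR x < bEnd n E σR z := by
  have hSx := hσR x hx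
  have hSz := hσR z hz
  have hsxy : σR x ≤ y := hSx.2.2 y hxy hnE
  obtain ⟨hbx1, hbx2⟩ := bEnd_bounds n E σR x
  obtain ⟨hbz1, hbz2⟩ := bEnd_bounds n E σR z
  rcases lt_trichotomy (σR z) y with hlt | heq | hgt
  · -- hard case : σR z < y
    have htz : z < σR z := hSz.1
    have hnzt : ¬ E z (σR z) := hSz.2.1
    have hVt : Vert n (σR z) := ⟨by linarith [hz.1], by linarith [hy.2]⟩
    have hle : σR x ≤ σR z := by
      by_contra hcon
      push_neg at hcon   -- σR z < σR x
      rcases le_or_gt (σR z) x with h1 | h1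
      · have hzltx : z < x := lt_of_lt_of_le htz h1
        have hzx : E z x := by
          rcases (hnest z x y y hz hx hy hy hzltx.le hxy.le le_rfl).1 ⟨hE, hE⟩ with h | h
          · exact h
          · exact absurd h.1.1 hnE
        rcases eq_or_lt_of_le h1 with h2 | h2
        · exact hnzt (h2 ▸ hzx)
        · rcases (hnest z (σR z) x y hz hVt hx hy htz.le h2.le hxy.le).1 ⟨hzx, hE⟩ with h | h
          · exact hnzt h
          · exact hnE h.2.2.1
      · have hExt : E x (σR z) := fullR hSx h1 hcon
        rcases le_or_gt z x with h2 | h2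
        · rcases (hnest z x (σR z) y hz hx hVt hy h2 h1.le hlt.le).2.2.1 ⟨hE, hExt⟩ with h | h
          · exact hnzt h
          · exact hnE h
        · rcases (hnest x z (σR z) y hx hz hVt hy h2.le htz.le hlt.le).2.2.2.2.1 ⟨hExt, hE⟩ with h | h
          · exact hnzt h
          · exact hnE h
    rcases eq_or_lt_of_le hle with hseq | hslt
    · -- equal stops: compare cardinalities
      have hsub : NRset n E σR x ⊆ NRset n E σR z := by
        intro w hw
        rw [NRset, Finset.mem_filter] at hw ⊢
        obtain ⟨hwIcc, hws, hEw⟩ := hw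
        have hVw : Vert n w := by
          rw [Finset.mem_Icc] at hwIcc; exact ⟨hwIcc.1, hwIcc.2⟩
        have hws' : σR z < w := hseq ▸ hws
        refine ⟨hwIcc, hws', ?_⟩
        have hxw : x < w := lt_trans hSx.1 hws
        have hzw : z < w := lt_trans htz hws'
        have hwy : w ≠ y := fun h => hnE (h ▸ hEw)
        rcases lt_or_gt_of_ne hwy with h3 | h3
        · rcases le_or_gt z x with h2 | h2
          · exact ((hnest z x w y hz hx hVw hy h2 hxw.le h3.le).2.2.1 ⟨hE, hEw⟩).resolve_right hnE
          · exact ((hnest x z w y hx hz hVw hy h2.le hzw.le h3.le).2.2.2.2.1 ⟨hEw, hE⟩).resolve_right hnE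
        · rcases le_or_gt z x with h2 | h2
          · exact ((hnest z x y w hz hx hy hVw h2 hxy.le h3.le).2.2.2.2.1 ⟨hE, hEw⟩).resolve_left hnE
          · exact ((hnest x z y w hx hz hy hVw h2.le hzy.le h3.le).2.2.1 ⟨hEw, hE⟩).resolve_left hnE
      have hyin : y ∈ NRset n E σR z := by
        rw [NRset, Finset.mem_filter]
        exact ⟨Finset.mem_Icc.mpr ⟨hy.1, hy.2⟩, hlt, hE⟩
      have hynot : y ∉ NRset n E σR x := by
        rw [NRset, Finset.mem_filter]
        rintro ⟨-, -, h⟩; exact hnE h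
      have hcard : (NRset n E σR x).card < (NRset n E σR z).card :=
        Finset.card_lt_card ((Finset.ssubset_iff_of_subset hsub).mpr ⟨y, hyin, hynot⟩)
      have hcardR : ((NRset n E σR x).card : ℝ) < ((NRset n E σR z).card : ℝ) := by
        exact_mod_cast hcard
      have := helper_div_lt (Nat.cast_nonneg (NRset n E σR x).card) hcardR
      unfold bEnd
      rw [hseq]
      linarith
    · have : (σR x : ℝ) + 1 ≤ (σR z : ℝ) := by exact_mod_cast hslt
      linarith
  · exact absurd hE (heq ▸ hSz.2.1)
  · have h3 : (y:ℝ) + 1 ≤ (σR z : ℝ) := by exact_mod_cast hgt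
    have h4 : (σR x : ℝ) ≤ (y : ℝ) := by exact_mod_cast hsxy
    linarith

/-- Key lemma (left version): if `y < x`, `xy ∉ E`, `y < z`, `zy ∈ E`,
then `a_z < a_x`. -/
lemma keyL (n : ℕ) (E : ℤ → ℤ → Prop)
    (hnest : NestOrdered n E)
    (σL : ℤ → ℤ) (hσL : ∀ x, Vert n x → IsStopL E σL x)
    {x y z : ℤ} (hx : Vert n x) (hy : Vert n y) (hz : Vert n z)
    (hxy : y < x) (hnE : ¬ E x y) (hzy : y < z) (hE : E z y) :
    aEnd n E σL z < aEnd n E σL x := by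
  have hSx := hσL x hx
  have hSz := hσL z hz
  have hsxy : y ≤ σL x := hSx.2.2 y hxy hnE
  obtain ⟨hax1, hax2⟩ := aEnd_bounds n E σL x
  obtain ⟨haz1, haz2⟩ := aEnd_bounds n E σL z
  rcases lt_trichotomy y (σL z) with hlt | heq | hgt
  · -- hard case : y < σL z
    have htz : σL z < z := hSz.1
    have hnzt : ¬ E z (σL z) := hSz.2.1
    have hVt : Vert n (σL z) := ⟨by linarith [hy.1], by linarith [hz.2]⟩
    have hle : σL z ≤ σL x := by
      by_contra hcon
      push_neg at hcon   -- σL x < σL z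
      rcases le_or_gt x (σL z) with h1 | h1
      · have hzltx : x < z := lt_of_le_of_lt h1 htz
        have hzx : E z x := by
          rcases (hnest y y x z hy hy hx hz le_rfl hxy.le hzltx.le).2.1 ⟨hE, hE⟩ with h | h
          · exact h
          · exact absurd h.1.1 hnE
        rcases eq_or_lt_of_le h1 with h2 | h2
        · exact hnzt (h2 ▸ hzx)
        · rcases (hnest y x (σL z) z hy hx hVt hz hxy.le h2.le htz.le).2.1 ⟨hE, hzx⟩ with h | h
          · exact hnzt h
          · exact hnE h.2.1.1
      · have hExt : E x (σL z) := fullL hSx hcon h1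
        rcases le_or_gt x z with h2 | h2
        · rcases (hnest y (σL z) x z hy hVt hx hz hlt.le h1.le h2).2.2.2.1 ⟨hE, hExt⟩ with h | h
          · exact hnzt h
          · exact hnE h
        · rcases (hnest y (σL z) z x hy hVt hz hx hlt.le htz.le h2.le).2.2.2.2.2 ⟨hExt, hE⟩ with h | h
          · exact hnE h
          · exact hnzt h
    rcases eq_or_lt_of_le hle with hseq | hslt
    · -- equal stops: compare cardinalities
      have hsub : NLset n E σL x ⊆ NLset n E σL z := by
        intro w hw
        rw [NLset, Finset.mem_filter] at hw ⊢
        obtain ⟨hwIcc, hws, hEw⟩ := hw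
        have hVw : Vert n w := by
          rw [Finset.mem_Icc] at hwIcc; exact ⟨hwIcc.1, hwIcc.2⟩
        have hws' : w < σL z := hseq ▸ hws
        refine ⟨hwIcc, hws', ?_⟩
        have hxw : w < x := lt_trans hws hSx.1
        have hzw : w < z := lt_trans hws' htz
        have hwy : w ≠ y := fun h => hnE (h ▸ hEw)
        rcases lt_or_gt_of_ne hwy with h3 | h3
        · rcases le_or_gt z x with h2 | h2
          · exact ((hnest w y z x hVw hy hz hx h3.le hzy.le h2).2.2.2.1 ⟨hEw, hE⟩).resolve_left hnE
          · exact ((hnest w y x z hVw hy hx hz h3.le hxy.le h2.le).2.2.2.2.2 ⟨hE, hEw⟩).resolve_right hnE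
        · rcases le_or_gt z x with h2 | h2
          · exact ((hnest y w z x hy hVw hz hx h3.le hzw.le h2).2.2.2.2.2 ⟨hEw, hE⟩).resolve_left hnE
          · exact ((hnest y w x z hy hVw hx hz h3.le hxw.le h2.le).2.2.2.1 ⟨hE, hEw⟩).resolve_right hnE
      have hyin : y ∈ NLset n E σL z := by
        rw [NLset, Finset.mem_filter]
        exact ⟨Finset.mem_Icc.mpr ⟨hy.1, hy.2⟩, hlt, hE⟩
      have hynot : y ∉ NLset n E σL x := by
        rw [NLset, Finset.mem_filter]
        rintro ⟨-, -, h⟩; exact hnE h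
      have hcard : (NLset n E σL x).card < (NLset n E σL z).card :=
        Finset.card_lt_card ((Finset.ssubset_iff_of_subset hsub).mpr ⟨y, hyin, hynot⟩)
      have hcardR : ((NLset n E σL x).card : ℝ) < ((NLset n E σL z).card : ℝ) := by
        exact_mod_cast hcard
      have := helper_div_lt (Nat.cast_nonneg (NLset n E σL x).card) hcardR
      unfold aEnd
      rw [hseq]
      linarith
    · have : (σL z : ℝ) + 1 ≤ (σL x : ℝ) := by exact_mod_cast hslt
      linarith
  · exact absurd hE (heq ▸ hSz.2.1)
  · have h3 : (σL z : ℝ) + 1 ≤ (y : ℝ) := by exact_mod_cast hgt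
    have h4 : (y : ℝ) ≤ (σL x : ℝ) := by exact_mod_cast hsxy
    linarith


/-- For a finite reflexive digraph with a nest ordering, the intervals of the
stop-function construction realize the arcs: `xy ∈ E` iff `I_x ∩ J_y ≠ ∅`. -/
theorem stop_construction_arc_iff_intersection
    (n : ℕ) (E : ℤ → ℤ → Prop)
    (hdom : ∀ x y, E x y → Vert n x ∧ Vert n y)
    (hrefl : ∀ x, Vert n x → E x x)
    (hnest : NestOrdered n E)
    (σR σL : ℤ → ℤ)
    (hσR : ∀ x, Vert n x → IsStopR E σR x)
    (hσL : ∀ x, Vert n x → IsStopL E σL x) :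
    ∀ x y, Vert n x → Vert n y →
      (E x y ↔
        (Set.Icc (aEnd n E σL x) (bEnd n E σR x) ∩
          Set.Icc (alphaEnd n E σR y) (betaEnd n E σL y)).Nonempty) := by
  intro x y hx hy
  have hSx := hσR x hx
  have hLx := hσL x hx
  obtain ⟨hbx1, hbx2⟩ := bEnd_bounds n E σR x
  obtain ⟨hax1, hax2⟩ := aEnd_bounds n E σL x
  have hsxup : (x:ℝ) + 1 ≤ (σR x : ℝ) := by exact_mod_cast hSx.1
  have hsxdn : (σL x : ℝ) + 1 ≤ (x:ℝ) := by exact_mod_cast hLx.1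
  have hbxgt : (x:ℝ) + 1/2 ≤ bEnd n E σR x := by linarith
  have haxlt : aEnd n E σL x ≤ (x:ℝ) - 1/2 := by linarith
  have halphay : alphaEnd n E σR y ≤ (y:ℝ) :=
    Finset.min'_le _ _ (Finset.mem_insert_self _ _)
  have hbetay : (y:ℝ) ≤ betaEnd n E σL y :=
    Finset.le_max' _ _ (Finset.mem_insert_self _ _)
  constructor
  · -- forward direction
    intro hExy
    rcases lt_trichotomy x y with hlt | heq | hgt
    · rcases lt_trichotomy (σR x) y with h1 | h1 | h1
      · -- σR x < y : use the point b_x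
        have hmem : x ∈ (Finset.Icc 1 (n : ℤ)).filter fun z => z < y ∧ E z y :=
          Finset.mem_filter.mpr ⟨Finset.mem_Icc.mpr ⟨hx.1, hx.2⟩, hlt, hExy⟩
        have h2 : alphaEnd n E σR y ≤ bEnd n E σR x :=
          Finset.min'_le _ _ (Finset.mem_insert_of_mem (Finset.mem_image_of_mem _ hmem))
        have h3 : (σR x : ℝ) ≤ (y:ℝ) := by exact_mod_cast h1.le
        exact ⟨bEnd n E σR x, ⟨by linarith, le_rfl⟩, h2, by linarith⟩
      · exact absurd hExy (h1 ▸ hSx.2.1)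
      · -- y < σR x : use the point y
        have h3 : (y:ℝ) + 1 ≤ (σR x : ℝ) := by exact_mod_cast h1
        have h4 : (x:ℝ) + 1 ≤ (y:ℝ) := by exact_mod_cast hlt
        exact ⟨(y:ℝ), ⟨by linarith, by linarith⟩, halphay, hbetay⟩
    · subst heq
      exact ⟨(x:ℝ), ⟨by linarith, by linarith⟩, halphay, hbetay⟩
    · rcases lt_trichotomy y (σL x) with h1 | h1 | h1
      · -- y < σL x : use the point a_x
        have hmem : x ∈ (Finset.Icc 1 (n : ℤ)).filter fun z => y < z ∧ E z y :=
          Finset.mem_filter.mpr ⟨Finset.mem_Icc.mpr ⟨hx.1, hx.2⟩, hgt, hExy⟩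
        have h2 : aEnd n E σL x ≤ betaEnd n E σL y :=
          Finset.le_max' _ _ (Finset.mem_insert_of_mem (Finset.mem_image_of_mem _ hmem))
        have h3 : (y:ℝ) ≤ (σL x : ℝ) := by exact_mod_cast h1.le
        exact ⟨aEnd n E σL x, ⟨le_rfl, by linarith⟩, by linarith, h2⟩
      · exact absurd hExy (h1 ▸ hLx.2.1)
      · -- σL x < y : use the point y
        have h3 : (σL x : ℝ) + 1 ≤ (y:ℝ) := by exact_mod_cast h1
        have h4 : (y:ℝ) + 1 ≤ (x:ℝ) := by exact_mod_cast hgt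
        exact ⟨(y:ℝ), ⟨by linarith, by linarith⟩, halphay, hbetay⟩
  · -- backward direction
    rintro ⟨p, ⟨hp1, hp2⟩, hp3, hp4⟩
    by_contra hnE
    rcases lt_trichotomy x y with hlt | heq | hgt
    · have hkey : bEnd n E σR x < alphaEnd n E σR y := by
        rw [alphaEnd, Finset.lt_min'_iff]
        intro b hb
        rcases Finset.mem_insert.mp hb with rfl | hb
        · have h3 : (σR x : ℝ) ≤ (y:ℝ) := by exact_mod_cast hSx.2.2 y hlt hnE
          linarith
        · obtain ⟨z, hzmem, rfl⟩ := Finset.mem_image.mp hb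
          rw [Finset.mem_filter, Finset.mem_Icc] at hzmem
          exact keyR n E hnest σR hσR hx hy ⟨hzmem.1.1, hzmem.1.2⟩ hlt hnE
            hzmem.2.1 hzmem.2.2
      linarith
    · exact hnE (heq ▸ hrefl x hx)
    · have hkey : betaEnd n E σL y < aEnd n E σL x := by
        rw [betaEnd, Finset.max'_lt_iff]
        intro b hb
        rcases Finset.mem_insert.mp hb with rfl | hb
        · have h3 : (y:ℝ) ≤ (σL x : ℝ) := by exact_mod_cast hLx.2.2 y hgt hnE
          linarith
        · obtain ⟨z, hzmem, rfl⟩ := Finset.mem_image.mp hb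
          rw [Finset.mem_filter, Finset.mem_Icc] at hzmem
          exact keyL n E hnest σL hσL hx hy ⟨hzmem.1.1, hzmem.1.2⟩ hgt hnE
            hzmem.2.1 hzmem.2.2
      linarith
end

section
/- Let D = (V,E) be a finite reflexive digraph admitting a nest ordering, with the stop functions σ_R, σ_L from the stop-function construction. If x < y are vertices of V with yx ∈ E, then σ_L(y) < σ_R(x). -/
open scoped Classical

/-- For a finite reflexive digraph with a nest ordering: if `x < y` are vertices
with `yx ∈ E`, then `σL y < σR x`. -/
theorem stop_construction_sigmaL_lt_sigmaR
    (n : ℕ) (E : ℤ → ℤ → Prop)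
    (hdom : ∀ x y, E x y → Vert n x ∧ Vert n y)
    (hrefl : ∀ x, Vert n x → E x x)
    (hnest : NestOrdered n E)
    (σR σL : ℤ → ℤ)
    (hσR : ∀ x, Vert n x → IsStopR E σR x)
    (hσL : ∀ x, Vert n x → IsStopL E σL x) :
    ∀ x y, Vert n x → Vert n y → x < y → E y x → σL y < σR x := by
  intro x y hx hy hxy hyx
  by_contra h
  push_neg at h
  obtain ⟨hsx, hnxs, _⟩ := hσR x hx
  obtain ⟨hty, hnyt, _⟩ := hσL y hy
  set s := σR x with hs
  set t := σL y with ht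
  have hst : s ≤ t := h
  have hvs : Vert n s := ⟨by linarith [hx.1], by linarith [hy.2]⟩
  have hvt : Vert n t := ⟨by linarith [hx.1], by linarith [hy.2]⟩
  -- First: E y s
  have h1 := (hnest x x s y hx hx hvs hy le_rfl (le_of_lt hsx)
      (by linarith)).2.1 ⟨hyx, hyx⟩
  have hys : E y s := by
    rcases h1 with h1 | ⟨⟨_, hxs⟩, _⟩
    · exact h1
    · exact absurd hxs hnxs
  -- Second: contradiction
  have h2 := (hnest x s t y hx hvs hvt hy (le_of_lt hsx) hst
      (le_of_lt hty)).2.1 ⟨hyx, hys⟩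
  rcases h2 with h2 | ⟨_, ⟨_, hxs⟩, _⟩
  · exact hnyt h2
  · exact hnxs hxs
end
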